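/- Let b : ℝ≥0 → ℝ≥0 be nonincreasing for large arguments with ∫_0^∞ b(r) r dr < ∞, β > 0, and suppose X(t) → ∞ satisfies ∫_{X(t)}^∞ ∫_{X(t)}^∞ b(√(y₁²+y₂²)) dy₁ dy₂ = e^{−βt} for large t. Define c(x) = (π/2) ∫_{√2 x}^∞ b(r) r dr and μ(t) = c^{−1}(e^{−βt}). Then for every ε ∈ (0,1) and all sufficiently large t: μ(t) ≥ X(t) ≥ (1/2) μ(t − εt). -/

import Mathlib

open MeasureTheory Filter Real Set

private lemma sector_integral (b : ℝ → ℝ) (a θ₁ θ₂ : ℝ) (ha : 0 ≤ a)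
    (h1 : -π ≤ θ₁) (h2 : θ₂ ≤ π) (h12 : θ₁ ≤ θ₂)
    (hbi : IntegrableOn (fun r => b r * r) (Set.Ioi a)) :
    IntegrableOn (fun y : ℝ × ℝ => b (Real.sqrt (y.1 ^ 2 + y.2 ^ 2)))
      (polarCoord.symm '' (Set.Ioi a ×ˢ Set.Ioo θ₁ θ₂)) ∧
    (∫ y in polarCoord.symm '' (Set.Ioi a ×ˢ Set.Ioo θ₁ θ₂),
        b (Real.sqrt (y.1 ^ 2 + y.2 ^ 2))) = (θ₂ - θ₁) * ∫ r in Set.Ioi a, b r * r := by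
  set g : ℝ × ℝ → ℝ := fun y => b (Real.sqrt (y.1 ^ 2 + y.2 ^ 2)) with hg
  set s : Set (ℝ × ℝ) := Set.Ioi a ×ˢ Set.Ioo θ₁ θ₂ with hs_def
  have hs : MeasurableSet s := measurableSet_Ioi.prod measurableSet_Ioo
  set B : ℝ × ℝ → ℝ × ℝ →L[ℝ] ℝ × ℝ := fun p =>
    LinearMap.toContinuousLinearMap (Matrix.toLin (Module.Basis.finTwoProd ℝ) (Module.Basis.finTwoProd ℝ)
      !![Real.cos p.2, -p.1 * Real.sin p.2; Real.sin p.2, p.1 * Real.cos p.2]) with hB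
  have hf' : ∀ p ∈ s, HasFDerivWithinAt polarCoord.symm (B p) s p := fun p _ =>
    (hasFDerivAt_polarCoord_symm p).hasFDerivWithinAt
  have B_det : ∀ p, (B p).det = p.1 := by
    intro p
    conv_rhs => rw [← one_mul p.1, ← cos_sq_add_sin_sq p.2]
    simp only [hB, neg_mul, LinearMap.det_toContinuousLinearMap, LinearMap.det_toLin,
      Matrix.det_fin_two_of, sub_neg_eq_add]
    ring
  have hsub : s ⊆ polarCoord.symm.source := by
    rw [OpenPartialHomeomorph.symm_source, polarCoord_target]
    exact Set.prod_mono (Set.Ioi_subset_Ioi ha) (Set.Ioo_subset_Ioo h1 h2)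
  have hinj : Set.InjOn polarCoord.symm s := polarCoord.symm.injOn.mono hsub
  have hEq : Set.EqOn (fun p : ℝ × ℝ => |(B p).det| • g (polarCoord.symm p))
      (fun p : ℝ × ℝ => b p.1 * p.1) s := by
    intro p hp
    have hr : 0 < p.1 := lt_of_le_of_lt ha hp.1
    have hsq : (p.1 * Real.cos p.2) ^ 2 + (p.1 * Real.sin p.2) ^ 2 = p.1 ^ 2 := by
      have h := Real.sin_sq_add_cos_sq p.2
      nlinarith [h]
    simp only [B_det, abs_of_pos hr, smul_eq_mul, hg, polarCoord_symm_apply, hsq,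
      Real.sqrt_sq hr.le]
    ring
  have hprod_int : IntegrableOn (fun p : ℝ × ℝ => b p.1 * p.1) s := by
    rw [hs_def, IntegrableOn, Measure.volume_eq_prod, ← Measure.prod_restrict]
    have h2' : Integrable (fun _ : ℝ => (1 : ℝ)) (volume.restrict (Set.Ioo θ₁ θ₂)) := by
      have : IsFiniteMeasure (volume.restrict (Set.Ioo θ₁ θ₂)) :=
        ⟨by rw [Measure.restrict_apply_univ]; exact measure_Ioo_lt_top⟩
      exact integrable_const 1
    simpa using hbi.mul_prod h2'
  have hint : IntegrableOn g (polarCoord.symm '' s) := by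
    rw [integrableOn_image_iff_integrableOn_abs_det_fderiv_smul volume hs hf' hinj g]
    exact hprod_int.congr_fun hEq.symm hs
  refine ⟨hint, ?_⟩
  rw [integral_image_eq_integral_abs_det_fderiv_smul volume hs hf' hinj g,
    setIntegral_congr_fun hs hEq]
  rw [hs_def, Measure.volume_eq_prod, ← Measure.prod_restrict]
  have : (∫ z : ℝ × ℝ, b z.1 * z.1
      ∂((volume.restrict (Set.Ioi a)).prod (volume.restrict (Set.Ioo θ₁ θ₂))))
      = (∫ r in Set.Ioi a, b r * r) * ∫ _θ in Set.Ioo θ₁ θ₂, (1 : ℝ) := by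
    rw [← integral_prod_mul (μ := volume.restrict (Set.Ioi a))
      (ν := volume.restrict (Set.Ioo θ₁ θ₂)) (fun r => b r * r) (fun _ => (1 : ℝ))]
    simp
  rw [this]
  simp [Real.volume_Ioo, ENNReal.toReal_ofReal (sub_nonneg.2 h12), mul_comm, h12]

private lemma quad_subset_sector (x : ℝ) (hx : 0 < x) :
    Set.Ioi x ×ˢ Set.Ioi x ⊆
      polarCoord.symm '' (Set.Ioi (Real.sqrt 2 * x) ×ˢ Set.Ioo 0 (π / 2)) := by
  rintro ⟨y₁, y₂⟩ ⟨h1, h2⟩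
  have h1' : x < y₁ := h1
  have h2' : x < y₂ := h2
  have hy1 : 0 < y₁ := hx.trans h1
  have hy2 : 0 < y₂ := hx.trans h2
  have hsrc : (y₁, y₂) ∈ polarCoord.source := by
    rw [polarCoord_source]; exact Or.inl hy1
  refine ⟨polarCoord (y₁, y₂), ?_, polarCoord.left_inv hsrc⟩
  have hre : (Complex.equivRealProd.symm (y₁, y₂)).re = y₁ := by
    simp [Complex.equivRealProd_symm_apply]
  have him : (Complex.equivRealProd.symm (y₁, y₂)).im = y₂ := by
    simp [Complex.equivRealProd_symm_apply]
  constructor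
  · show Real.sqrt 2 * x < Real.sqrt (y₁ ^ 2 + y₂ ^ 2)
    have : Real.sqrt 2 * x = Real.sqrt (2 * x ^ 2) := by
      rw [Real.sqrt_mul (by norm_num), Real.sqrt_sq hx.le]
    rw [this]
    exact Real.sqrt_lt_sqrt (by positivity) (by nlinarith)
  · show Complex.arg (Complex.equivRealProd.symm (y₁, y₂)) ∈ Set.Ioo 0 (π / 2)
    constructor
    · refine lt_of_le_of_ne (Complex.arg_nonneg_iff.2 (by rw [him]; exact hy2.le)) ?_
      intro h
      have := (Complex.arg_eq_zero_iff).1 h.symm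
      rw [him] at this
      exact hy2.ne' this.2
    · exact Complex.arg_lt_pi_div_two_iff.2 (Or.inl (by rw [hre]; exact hy1))

private lemma sector_subset_quad (x : ℝ) (hx : 0 < x) :
    polarCoord.symm '' (Set.Ioi (2 * x) ×ˢ Set.Ioo (π / 6) (π / 3)) ⊆
      Set.Ioi x ×ˢ Set.Ioi x := by
  rintro _ ⟨⟨r, θ⟩, ⟨hr, hθ⟩, rfl⟩
  have hpi := Real.pi_pos
  have hθ1 : (π / 6 : ℝ) < θ := hθ.1
  have hθ2 : θ < π / 3 := hθ.2
  have hr' : 2 * x < r := hr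
  have hcos : (1 / 2 : ℝ) < Real.cos θ := by
    have := Real.cos_lt_cos_of_nonneg_of_le_pi (by linarith) (by linarith) hθ2
    rwa [Real.cos_pi_div_three] at this
  have hsin : (1 / 2 : ℝ) < Real.sin θ := by
    have := Real.sin_lt_sin_of_lt_of_le_pi_div_two (by linarith) (by linarith) hθ1
    rwa [Real.sin_pi_div_six] at this
  constructor
  · show x < r * Real.cos θ
    nlinarith
  · show x < r * Real.sin θ
    nlinarith

theorem two_dim_front_estimate (b X μ : ℝ → ℝ) (β R₀ : ℝ)
    (hβ : 0 < β)
    (hb_nonneg : ∀ r, 0 ≤ r → 0 ≤ b r)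
    (hb_anti : AntitoneOn b (Set.Ici R₀))
    (hb_int : IntegrableOn (fun r => b r * r) (Set.Ioi (0 : ℝ)))
    (hX_top : Tendsto X atTop atTop)
    (hX : ∀ᶠ t in atTop,
      (∫ y₁ in Set.Ioi (X t), ∫ y₂ in Set.Ioi (X t),
        b (Real.sqrt (y₁ ^ 2 + y₂ ^ 2))) = Real.exp (-β * t))
    (c : ℝ → ℝ)
    (hc : ∀ x, c x = (Real.pi / 2) * ∫ r in Set.Ioi (Real.sqrt 2 * x), b r * r)
    (hc_anti : StrictAntiOn c (Set.Ici 0))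
    (hμ_nonneg : ∀ᶠ t in atTop, 0 ≤ μ t)
    (hμ : ∀ᶠ t in atTop, c (μ t) = Real.exp (-β * t)) :
    ∀ ε ∈ Set.Ioo (0 : ℝ) 1, ∀ᶠ t in atTop,
      X t ≤ μ t ∧ (1 / 2) * μ ((1 - ε) * t) ≤ X t := by
  intro ε hε
  have hpi := Real.pi_pos
  have h1ε : (0 : ℝ) < 1 - ε := by linarith [hε.2]
  have htend : Tendsto (fun t => (1 - ε) * t) atTop atTop :=
    tendsto_id.const_mul_atTop h1ε
  have hbe : Tendsto (fun t => β * ε * t) atTop atTop :=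
    tendsto_id.const_mul_atTop (mul_pos hβ hε.1)
  have hsmall : ∀ᶠ t in atTop, Real.exp (-(β * ε * t)) < 1 / 3 := by
    have h0 : Tendsto (fun t => Real.exp (-(β * ε * t))) atTop (nhds 0) :=
      Real.tendsto_exp_neg_atTop_nhds_zero.comp hbe
    exact h0.eventually_lt_const (by norm_num)
  have hg0 : ∀ y : ℝ × ℝ, 0 ≤ b (Real.sqrt (y.1 ^ 2 + y.2 ^ 2)) := fun y =>
    hb_nonneg _ (Real.sqrt_nonneg _)
  filter_upwards [hX, hμ, hμ_nonneg, htend.eventually hμ, htend.eventually hμ_nonneg,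
    hX_top.eventually_gt_atTop 0, hsmall] with t hXt hμt hμnt hμs hμns hxpos hsm
  set x := X t with hxdef
  -- sector integral facts
  have sec₁ := sector_integral b (Real.sqrt 2 * x) 0 (π / 2) (by positivity)
    (by linarith) (by linarith) (by linarith)
    (hb_int.mono_set (Set.Ioi_subset_Ioi (by positivity)))
  have sec₂ := sector_integral b (2 * x) (π / 6) (π / 3) (by positivity)
    (by linarith) (by linarith) (by linarith)
    (hb_int.mono_set (Set.Ioi_subset_Ioi (by positivity)))
  have hsub1 := quad_subset_sector x hxpos
  have hsub2 := sector_subset_quad x hxpos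
  have hS_int : IntegrableOn (fun y : ℝ × ℝ => b (Real.sqrt (y.1 ^ 2 + y.2 ^ 2)))
      (Set.Ioi x ×ˢ Set.Ioi x) := sec₁.1.mono_set hsub1
  have hEqS : (∫ z in Set.Ioi x ×ˢ Set.Ioi x, b (Real.sqrt (z.1 ^ 2 + z.2 ^ 2)))
      = Real.exp (-β * t) := by
    rw [← hXt]
    exact MeasureTheory.setIntegral_prod _ hS_int
  have hae1 : 0 ≤ᵐ[volume.restrict (polarCoord.symm ''
      (Set.Ioi (Real.sqrt 2 * x) ×ˢ Set.Ioo 0 (π / 2)))]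
      fun y : ℝ × ℝ => b (Real.sqrt (y.1 ^ 2 + y.2 ^ 2)) :=
    Filter.Eventually.of_forall hg0
  have haeS : 0 ≤ᵐ[volume.restrict (Set.Ioi x ×ˢ Set.Ioi x)]
      fun y : ℝ × ℝ => b (Real.sqrt (y.1 ^ 2 + y.2 ^ 2)) :=
    Filter.Eventually.of_forall hg0
  -- upper bound : exp(-βt) ≤ c x
  have hle1 : Real.exp (-β * t) ≤ c x := by
    rw [hc x, ← hEqS]
    calc (∫ z in Set.Ioi x ×ˢ Set.Ioi x, b (Real.sqrt (z.1 ^ 2 + z.2 ^ 2)))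
        ≤ ∫ y in polarCoord.symm '' (Set.Ioi (Real.sqrt 2 * x) ×ˢ Set.Ioo 0 (π / 2)),
            b (Real.sqrt (y.1 ^ 2 + y.2 ^ 2)) :=
          setIntegral_mono_set sec₁.1 hae1 hsub1.eventuallyLE
      _ = (π / 2 - 0) * ∫ r in Set.Ioi (Real.sqrt 2 * x), b r * r := sec₁.2
      _ = (π / 2) * ∫ r in Set.Ioi (Real.sqrt 2 * x), b r * r := by ring
  have hfirst : x ≤ μ t := by
    by_contra hcon
    push_neg at hcon
    have := hc_anti hμnt (Set.mem_Ici.2 hxpos.le) hcon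
    rw [hμt] at this
    linarith
  refine ⟨hfirst, ?_⟩
  -- lower bound
  by_contra hcon
  push_neg at hcon
  set m := μ ((1 - ε) * t) with hmdef
  have hm0 : 0 ≤ m := hμns
  have h2x : 2 * x < m := by linarith
  have hsqrt2 : (1 : ℝ) ≤ Real.sqrt 2 := by
    rw [show (1 : ℝ) = Real.sqrt 1 from (Real.sqrt_one).symm]
    exact Real.sqrt_le_sqrt one_le_two
  have hm2 : 2 * x ≤ Real.sqrt 2 * m := by nlinarith
  have hI2x : IntegrableOn (fun r => b r * r) (Set.Ioi (2 * x)) :=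
    hb_int.mono_set (Set.Ioi_subset_Ioi (by positivity))
  have hae2 : 0 ≤ᵐ[volume.restrict (Set.Ioi (2 * x))] fun r => b r * r := by
    rw [Filter.EventuallyLE, ae_restrict_iff' measurableSet_Ioi]
    exact Filter.Eventually.of_forall fun r hr =>
      mul_nonneg (hb_nonneg r (le_of_lt (lt_of_le_of_lt (by positivity) hr))) (le_of_lt
        (lt_of_le_of_lt (by positivity) hr))
  have hmono : (∫ r in Set.Ioi (Real.sqrt 2 * m), b r * r) ≤ ∫ r in Set.Ioi (2 * x), b r * r :=
    setIntegral_mono_set hI2x hae2 (Set.Ioi_subset_Ioi hm2).eventuallyLE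
  have hlow : (π / 3 - π / 6) * (∫ r in Set.Ioi (2 * x), b r * r) ≤ Real.exp (-β * t) := by
    rw [← hEqS, ← sec₂.2]
    exact setIntegral_mono_set hS_int haeS hsub2.eventuallyLE
  have hcm : c m = Real.exp (-β * ((1 - ε) * t)) := hμs
  have h5 : Real.exp (-β * ((1 - ε) * t)) ≤ 3 * Real.exp (-β * t) := by
    calc Real.exp (-β * ((1 - ε) * t)) = (π / 2) * ∫ r in Set.Ioi (Real.sqrt 2 * m), b r * r := by
          rw [← hcm, hc m]
      _ ≤ (π / 2) * ∫ r in Set.Ioi (2 * x), b r * r :=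
          mul_le_mul_of_nonneg_left hmono (by positivity)
      _ = 3 * ((π / 3 - π / 6) * ∫ r in Set.Ioi (2 * x), b r * r) := by ring
      _ ≤ 3 * Real.exp (-β * t) := by linarith
  have hsplit : Real.exp (-β * t)
      = Real.exp (-β * ((1 - ε) * t)) * Real.exp (-(β * ε * t)) := by
    rw [← Real.exp_add]; ring_nf
  nlinarith [Real.exp_pos (-β * ((1 - ε) * t)), Real.exp_pos (-(β * ε * t)), hsm, h5, hsplit]
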